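/- arXiv:2203.02315 — 2 statements merged into one kernel-verified Lean document; each statement's English description precedes it below -/
import Mathlib

section
/- Let P be a convex lattice polygon in the plane and let a, b, z be lattice points forming a unimodular triangle (a triangle of Euclidean area 1/2) that is contained in P, such that z lies in the interior of P and a and b lie on the boundary of P. Then either a and b lie on a common edge of P, or the lattice point a + b − z is contained in P. -/
/-- The real point corresponding to a lattice point. -/
def toR (p : ℤ × ℤ) : ℝ × ℝ := ((p.1 : ℝ), (p.2 : ℝ))

/-- A lattice polygon: convex hull of finitely many lattice points, with nonempty interior. -/
def IsLatticePolygon (P : Set (ℝ × ℝ)) : Prop :=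
  ∃ S : Finset (ℤ × ℤ), P = convexHull ℝ (↑(S.image toR)) ∧ (interior P).Nonempty

/-- An edge of a convex polygon: a one-dimensional face, i.e. an extreme subset
which is a segment between two distinct points. -/
def IsEdge (P E : Set (ℝ × ℝ)) : Prop :=
  IsExtreme ℝ P E ∧ ∃ u v : ℝ × ℝ, u ≠ v ∧ E = segment ℝ u v

/-- A unimodular lattice triangle: |det(b−a, z−a)| = 1. -/
def Unimodular (a b z : ℤ × ℤ) : Prop :=
  |(b.1 - a.1) * (z.2 - a.2) - (b.2 - a.2) * (z.1 - a.1)| = 1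

set_option maxHeartbeats 2000000 in
theorem stmt0 (P : Set (ℝ × ℝ)) (hP : IsLatticePolygon P)
    (a b z : ℤ × ℤ) (huni : Unimodular a b z)
    (hsub : convexHull ℝ {toR a, toR b, toR z} ⊆ P)
    (hz : toR z ∈ interior P)
    (ha : toR a ∈ frontier P) (hb : toR b ∈ frontier P) :
    (∃ E : Set (ℝ × ℝ), IsEdge P E ∧ toR a ∈ E ∧ toR b ∈ E) ∨ toR (a + b - z) ∈ P := by
  classical
  obtain ⟨S, hPS, hPint⟩ := hP
  have hPc : Convex ℝ P := by rw [hPS]; exact convex_convexHull ℝ _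
  have hPcomp : IsCompact P := by
    rw [hPS]; exact (Finset.finite_toSet _).isCompact_convexHull ℝ
  obtain ⟨z₀, hz₀⟩ := hPint
  -- supporting functionals at frontier points
  have hsupp : ∀ x : ℝ × ℝ, x ∈ P → x ∉ interior P →
      ∃ f : (ℝ × ℝ) →L[ℝ] ℝ, (∀ y ∈ interior P, f y < f x) ∧ (∀ y ∈ P, f y ≤ f x) := by
    intro x hxP hxI
    obtain ⟨f, hf⟩ := geometric_hahn_banach_open_point hPc.interior isOpen_interior hxI
    refine ⟨f, hf, ?_⟩
    intro y hy
    have key : ∀ n : ℕ, f ((1 - (1/(n+1) : ℝ)) • y + (1/(n+1) : ℝ) • z₀) ≤ f x := by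
      intro n
      have hn0 : (0:ℝ) < 1/(n+1) := by positivity
      have hmem : (1 - (1/(n+1):ℝ)) • y + (1/(n+1):ℝ) • z₀ ∈ interior P := by
        refine hPc.combo_closure_interior_mem_interior (subset_closure hy) hz₀ ?_ hn0 (by ring)
        have : (1/(n+1) : ℝ) ≤ 1 := by
          rw [div_le_one (by positivity)]
          linarith [Nat.cast_nonneg (α := ℝ) n]
        linarith
      exact (hf _ hmem).le
    have htend : Filter.Tendsto
        (fun n : ℕ => f ((1 - (1/(n+1) : ℝ)) • y + (1/(n+1) : ℝ) • z₀))
        Filter.atTop (nhds (f y)) := by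
      have h0 : Filter.Tendsto (fun n : ℕ => (1/(n+1) : ℝ)) Filter.atTop (nhds 0) :=
        tendsto_one_div_add_atTop_nhds_zero_nat
      have hc : Continuous fun t : ℝ => f ((1 - t) • y + t • z₀) := by fun_prop
      have := (hc.tendsto 0).comp h0
      simpa [Function.comp_def] using this
    exact le_of_tendsto' htend key
  have hAP : toR a ∈ P := hsub (subset_convexHull ℝ _ (by simp))
  have hBP : toR b ∈ P := hsub (subset_convexHull ℝ _ (by simp))
  -- determinant
  set d : ℤ := (b.1 - a.1) * (z.2 - a.2) - (b.2 - a.2) * (z.1 - a.1) with hd_def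
  have habs : |d| = 1 := huni
  have hd1 : d = 1 ∨ d = -1 := (abs_eq (by norm_num)).mp habs
  have hd2 : (d : ℝ) * (d : ℝ) = 1 := by rcases hd1 with h | h <;> rw [h] <;> norm_num
  have hdR : (d : ℝ) = ((b.1:ℝ) - a.1) * ((z.2:ℝ) - a.2) - ((b.2:ℝ) - a.2) * ((z.1:ℝ) - a.1) := by
    rw [hd_def]; push_cast; ring
  set X : ℝ × ℝ → ℝ := fun v =>
    (d:ℝ) * ((v.1 - (a.1:ℝ)) * ((z.2:ℝ) - a.2) - (v.2 - (a.2:ℝ)) * ((z.1:ℝ) - a.1)) with hX_def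
  set Y : ℝ × ℝ → ℝ := fun v =>
    (d:ℝ) * (((b.1:ℝ) - a.1) * (v.2 - (a.2:ℝ)) - ((b.2:ℝ) - a.2) * (v.1 - (a.1:ℝ))) with hY_def
  have hrepr : ∀ v : ℝ × ℝ, v = toR a + X v • (toR b - toR a) + Y v • (toR z - toR a) := by
    intro v
    rw [Prod.ext_iff]
    constructor
    · simp only [hX_def, hY_def, toR, Prod.fst_add, Prod.smul_fst, Prod.fst_sub, smul_eq_mul]
      linear_combination ((d:ℝ) * (v.1 - (a.1:ℝ))) * hdR - (v.1 - (a.1:ℝ)) * hd2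
    · simp only [hX_def, hY_def, toR, Prod.snd_add, Prod.smul_snd, Prod.snd_sub, smul_eq_mul]
      linear_combination ((d:ℝ) * (v.2 - (a.2:ℝ))) * hdR - (v.2 - (a.2:ℝ)) * hd2
  have heval : ∀ (f : (ℝ × ℝ) →L[ℝ] ℝ) (v : ℝ × ℝ),
      f v = f (toR a) + X v * (f (toR b) - f (toR a)) + Y v * (f (toR z) - f (toR a)) := by
    intro f v
    conv_lhs => rw [hrepr v]
    simp only [map_add, map_smul, map_sub, smul_eq_mul]
  have haffX : ∀ (θ₁ θ₂ : ℝ) (u v : ℝ × ℝ), θ₁ + θ₂ = 1 →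
      X (θ₁ • u + θ₂ • v) = θ₁ * X u + θ₂ * X v := by
    intro θ₁ θ₂ u v h
    obtain rfl : θ₂ = 1 - θ₁ := by linarith
    simp only [hX_def, Prod.fst_add, Prod.smul_fst, Prod.snd_add, Prod.smul_snd, smul_eq_mul]
    ring
  have haffY : ∀ (θ₁ θ₂ : ℝ) (u v : ℝ × ℝ), θ₁ + θ₂ = 1 →
      Y (θ₁ • u + θ₂ • v) = θ₁ * Y u + θ₂ * Y v := by
    intro θ₁ θ₂ u v h
    obtain rfl : θ₂ = 1 - θ₁ := by linarith
    simp only [hY_def, Prod.fst_add, Prod.smul_fst, Prod.snd_add, Prod.smul_snd, smul_eq_mul]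
    ring
  have hinj : ∀ u v : ℝ × ℝ, X u = X v → Y u = Y v → u = v := by
    intro u v h1 h2
    have hu := hrepr u
    rw [h1, h2] at hu
    exact hu.trans (hrepr v).symm
  have hXA : X (toR a) = 0 := by simp only [hX_def, toR]; ring
  have hYA : Y (toR a) = 0 := by simp only [hY_def, toR]; ring
  have hXB : X (toR b) = 1 := by
    simp only [hX_def, toR]
    linear_combination (-(d:ℝ)) * hdR + hd2
  have hYB : Y (toR b) = 0 := by simp only [hY_def, toR]; ring
  have hXZ : X (toR z) = 0 := by simp only [hX_def, toR]; ring
  have hYZ : Y (toR z) = 1 := by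
    simp only [hY_def, toR]
    linear_combination (-(d:ℝ)) * hdR + hd2
  have hXT : X (toR (a + b - z)) = 1 := by
    simp only [hX_def, toR, Prod.fst_add, Prod.fst_sub, Prod.snd_add, Prod.snd_sub]
    push_cast
    linear_combination (-(d:ℝ)) * hdR + hd2
  have hYT : Y (toR (a + b - z)) = -1 := by
    simp only [hY_def, toR, Prod.fst_add, Prod.fst_sub, Prod.snd_add, Prod.snd_sub]
    push_cast
    linear_combination (d:ℝ) * hdR - hd2
  -- the midpoint of a and b
  set m : ℝ × ℝ := (1/2 : ℝ) • toR a + (1/2 : ℝ) • toR b with hm_def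
  have hmP : m ∈ P := by
    rw [hm_def]; exact hPc hAP hBP (by norm_num) (by norm_num) (by norm_num)
  by_cases hmI : m ∈ interior P
  · -- midpoint interior: we show toR (a+b-z) ∈ P
    refine Or.inr ?_
    -- a lattice point of S strictly below the line ab
    have hexw : ∃ w ∈ S, d * ((b.1 - a.1) * (w.2 - a.2) - (b.2 - a.2) * (w.1 - a.1)) ≤ -1 := by
      by_contra hno
      push_neg at hno
      have hall : ∀ w ∈ S, 0 ≤ d * ((b.1 - a.1) * (w.2 - a.2) - (b.2 - a.2) * (w.1 - a.1)) := by
        intro w hw; have := hno w hw; omega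
      have hPY : P ⊆ {v : ℝ × ℝ | 0 ≤ Y v} := by
        rw [hPS]
        apply convexHull_min
        · intro v hv
          simp only [Finset.coe_image, Set.mem_image, Finset.mem_coe] at hv
          obtain ⟨w, hwS, rfl⟩ := hv
          have h0 := hall w hwS
          have : (0:ℝ) ≤ (d:ℝ) * (((b.1:ℝ) - a.1) * ((w.2:ℝ) - a.2)
              - ((b.2:ℝ) - a.2) * ((w.1:ℝ) - a.1)) := by exact_mod_cast h0
          simpa only [Set.mem_setOf_eq, hY_def, toR] using this
        · intro p hp q hq θ₁ θ₂ h₁ h₂ hsum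
          simp only [Set.mem_setOf_eq] at hp hq ⊢
          rw [haffY θ₁ θ₂ p q hsum]
          have := mul_nonneg h₁ hp
          have := mul_nonneg h₂ hq
          linarith
      obtain ⟨ε, hε, hball⟩ := Metric.mem_nhds_iff.mp (isOpen_interior.mem_nhds hmI)
      set Δ : ℝ × ℝ := toR a - toR z with hΔ_def
      set t : ℝ := ε / (‖Δ‖ + 1) with ht_def
      have ht0 : 0 < t := by
        rw [ht_def]; positivity
      have hmem : m + t • Δ ∈ P := by
        have hdist : dist (m + t • Δ) m < ε := by
          rw [dist_eq_norm, add_sub_cancel_left, norm_smul, Real.norm_eq_abs, abs_of_pos ht0]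
          have h1 : t * ‖Δ‖ < t * (‖Δ‖ + 1) := by
            have := mul_lt_mul_of_pos_left (lt_add_one ‖Δ‖) ht0
            linarith
          have h2 : t * (‖Δ‖ + 1) = ε := by
            rw [ht_def]; field_simp
          linarith
        exact interior_subset (hball (Metric.mem_ball.mpr hdist))
      have hYm' : Y (m + t • Δ) = -t := by
        simp only [hY_def, hm_def, hΔ_def, toR, Prod.fst_add, Prod.snd_add, Prod.smul_fst,
          Prod.smul_snd, Prod.fst_sub, Prod.snd_sub, smul_eq_mul]
        linear_combination (t * (d:ℝ)) * hdR - t * hd2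
      have h0 := hPY hmem
      simp only [Set.mem_setOf_eq] at h0
      rw [hYm'] at h0
      linarith
    obtain ⟨w, hwS, hYw⟩ := hexw
    have hWP : toR w ∈ P := by
      rw [hPS]
      exact subset_convexHull ℝ _ (Finset.mem_coe.mpr (Finset.mem_image_of_mem toR hwS))
    -- cast facts about X (toR w), Y (toR w)
    have hXwcast : X (toR w) = ((d * ((w.1 - a.1) * (z.2 - a.2) - (w.2 - a.2) * (z.1 - a.1)) : ℤ) : ℝ) := by
      simp only [hX_def, toR]; push_cast; ring
    have hYwcast : Y (toR w) = ((d * ((b.1 - a.1) * (w.2 - a.2) - (b.2 - a.2) * (w.1 - a.1)) : ℤ) : ℝ) := by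
      simp only [hY_def, toR]; push_cast; ring
    have hywR : Y (toR w) ≤ -1 := by
      rw [hYwcast]
      exact_mod_cast hYw
    -- supporting lines at a and b
    obtain ⟨f, hfint, hfle⟩ := hsupp (toR a) hAP ha.2
    obtain ⟨g, hgint, hgle⟩ := hsupp (toR b) hBP hb.2
    have hfmid : f m = (f (toR a) + f (toR b)) / 2 := by
      rw [hm_def]; simp only [map_add, map_smul, smul_eq_mul]; ring
    have hgmid : g m = (g (toR a) + g (toR b)) / 2 := by
      rw [hm_def]; simp only [map_add, map_smul, smul_eq_mul]; ring
    have hfm : f m < f (toR a) := hfint m hmI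
    have hgm : g m < g (toR b) := hgint m hmI
    have hfB : f (toR b) < f (toR a) := by linarith
    have hgA : g (toR a) < g (toR b) := by linarith
    have hfZ : f (toR z) < f (toR a) := hfint _ hz
    have hgZ : g (toR z) < g (toR b) := hgint _ hz
    have hfW : f (toR w) ≤ f (toR a) := hfle _ hWP
    have hgW : g (toR w) ≤ g (toR b) := hgle _ hWP
    have hevf := heval f (toR w)
    have hevg := heval g (toR w)
    -- X (toR w) ≥ 1
    have hxw_pos : 0 < X (toR w) := by
      by_contra hc
      push_neg at hc
      have hBA : (0:ℝ) ≤ f (toR a) - f (toR b) := by linarith only [hfB]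
      have hZA : (0:ℝ) ≤ f (toR a) - f (toR z) := by linarith only [hfZ]
      have h1 : 0 ≤ X (toR w) * (f (toR b) - f (toR a)) := by
        have := mul_nonneg (neg_nonneg.mpr hc) hBA
        linarith only [this]
      have h2 : f (toR a) - f (toR z) ≤ Y (toR w) * (f (toR z) - f (toR a)) := by
        have := mul_nonneg (by linarith only [hywR] : (0:ℝ) ≤ -1 - Y (toR w)) hZA
        linarith only [this]
      linarith only [hevf, hfW, h1, h2, hfZ]
    have hxw1 : (1:ℝ) ≤ X (toR w) := by
      rw [hXwcast] at hxw_pos ⊢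
      have : 0 < d * ((w.1 - a.1) * (z.2 - a.2) - (w.2 - a.2) * (z.1 - a.1)) := by
        exact_mod_cast hxw_pos
      exact_mod_cast this
    -- X (toR w) + Y (toR w) ≤ 0
    have hkeyg : (-(Y (toR w))) * (g (toR b) - g (toR z)) ≤
        (1 - X (toR w) - Y (toR w)) * (g (toR b) - g (toR a)) := by
      linarith only [hevg, hgW]
    have hkeyg2 : g (toR b) - g (toR z) ≤ (-(Y (toR w))) * (g (toR b) - g (toR z)) := by
      have := mul_nonneg (by linarith only [hywR] : (0:ℝ) ≤ -1 - Y (toR w))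
        (by linarith only [hgZ] : (0:ℝ) ≤ g (toR b) - g (toR z))
      linarith only [this]
    have hsum_lt : X (toR w) + Y (toR w) < 1 := by
      by_contra hc
      push_neg at hc
      have : (1 - X (toR w) - Y (toR w)) * (g (toR b) - g (toR a)) ≤ 0 := by
        have := mul_nonneg (by linarith only [hc] : (0:ℝ) ≤ X (toR w) + Y (toR w) - 1)
          (by linarith only [hgA] : (0:ℝ) ≤ g (toR b) - g (toR a))
        linarith only [this]
      linarith only [this, hkeyg, hkeyg2, hgZ]
    have hsumR : X (toR w) + Y (toR w) ≤ 0 := by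
      rw [hXwcast, hYwcast] at hsum_lt ⊢
      have h1 : ((d * ((w.1 - a.1) * (z.2 - a.2) - (w.2 - a.2) * (z.1 - a.1))
          + d * ((b.1 - a.1) * (w.2 - a.2) - (b.2 - a.2) * (w.1 - a.1)) : ℤ) : ℝ) < 1 := by
        push_cast
        push_cast at hsum_lt
        linarith
      have h2 : (d * ((w.1 - a.1) * (z.2 - a.2) - (w.2 - a.2) * (z.1 - a.1))
          + d * ((b.1 - a.1) * (w.2 - a.2) - (b.2 - a.2) * (w.1 - a.1)) : ℤ) ≤ 0 := by
        have := (Int.lt_iff_add_one_le).mp (by exact_mod_cast h1)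
        omega
      have h3 : ((d * ((w.1 - a.1) * (z.2 - a.2) - (w.2 - a.2) * (z.1 - a.1))
          + d * ((b.1 - a.1) * (w.2 - a.2) - (b.2 - a.2) * (w.1 - a.1)) : ℤ) : ℝ) ≤ 0 := by
        exact_mod_cast h2
      push_cast at h3 ⊢
      linarith only [h3]
    -- the two auxiliary points
    have hywne : Y (toR w) ≠ 0 := by linarith
    set ν : ℝ := 1 / (-(Y (toR w))) with hν_def
    have hywpos : 0 < -(Y (toR w)) := by linarith
    have hν0 : 0 < ν := by rw [hν_def]; positivity
    have hνy : ν * (-(Y (toR w))) = 1 := by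
      rw [hν_def]; field_simp
    have hν1 : ν ≤ 1 := by
      rw [hν_def, div_le_one hywpos]; linarith
    set u : ℝ × ℝ := (1 - ν) • toR a + ν • toR w with hu_def
    set v : ℝ × ℝ := (1 - ν) • toR b + ν • toR w with hv_def
    have huP : u ∈ P := by
      rw [hu_def]; exact hPc hAP hWP (by linarith) hν0.le (by ring)
    have hvP : v ∈ P := by
      rw [hv_def]; exact hPc hBP hWP (by linarith) hν0.le (by ring)
    have hXu : X u = ν * X (toR w) := by
      rw [hu_def, haffX (1-ν) ν _ _ (by ring), hXA]; ring
    have hYu : Y u = -1 := by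
      rw [hu_def, haffY (1-ν) ν _ _ (by ring), hYA]
      linear_combination -hνy
    have hXv : X v = (1 - ν) + ν * X (toR w) := by
      rw [hv_def, haffX (1-ν) ν _ _ (by ring), hXB]; ring
    have hYv : Y v = -1 := by
      rw [hv_def, haffY (1-ν) ν _ _ (by ring), hYB]
      linear_combination -hνy
    by_cases hν_eq : ν = 1
    · have hyw_eq : Y (toR w) = -1 := by
        rw [hν_eq] at hνy; linarith
      have hxw_eq : X (toR w) = 1 := le_antisymm (by linarith) hxw1
      have hTeq : toR (a + b - z) = u := by
        refine hinj _ _ ?_ ?_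
        · rw [hXT, hXu, hν_eq, hxw_eq]; norm_num
        · rw [hYT, hYu]
      rw [hTeq]; exact huP
    · have hν_lt : ν < 1 := lt_of_le_of_ne hν1 hν_eq
      have hδ : 0 < 1 - ν := by linarith
      have hνxw : ν * X (toR w) ≤ 1 := by
        have h1 : X (toR w) ≤ -(Y (toR w)) := by linarith
        have h2 : ν * X (toR w) ≤ ν * (-(Y (toR w))) :=
          mul_le_mul_of_nonneg_left h1 hν0.le
        linarith
      set θ : ℝ := (1 - ν * X (toR w)) / (1 - ν) with hθ_def
      have hθ0 : 0 ≤ θ := div_nonneg (by linarith) hδ.le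
      have hθ1 : θ ≤ 1 := by
        rw [hθ_def, div_le_one hδ]
        have := mul_le_mul_of_nonneg_left hxw1 hν0.le
        linarith
      have hcombP : (1 - θ) • u + θ • v ∈ P := hPc huP hvP (by linarith) hθ0 (by ring)
      have hθδ : θ * (1 - ν) = 1 - ν * X (toR w) := by
        rw [hθ_def]; field_simp
      have hXc : X ((1 - θ) • u + θ • v) = 1 := by
        rw [haffX (1-θ) θ u v (by ring), hXu, hXv]
        linear_combination hθδ
      have hYc : Y ((1 - θ) • u + θ • v) = -1 := by
        rw [haffY (1-θ) θ u v (by ring), hYu, hYv]; ring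
      have hTeq : toR (a + b - z) = (1 - θ) • u + θ • v := by
        refine hinj _ _ ?_ ?_
        · rw [hXT, hXc]
        · rw [hYT, hYc]
      rw [hTeq]; exact hcombP
  · -- midpoint on the frontier: a and b lie on a common edge
    obtain ⟨f, hfint, hfle⟩ := hsupp m hmP hmI
    set c : ℝ := f m with hc_def
    have hfA : f (toR a) ≤ c := hfle _ hAP
    have hfB : f (toR b) ≤ c := hfle _ hBP
    have hfmid : f m = (f (toR a) + f (toR b)) / 2 := by
      rw [hm_def]; simp only [map_add, map_smul, smul_eq_mul]; ring
    have hfAc : f (toR a) = c := by rw [hc_def] at hfA hfB ⊢; linarith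
    have hfBc : f (toR b) = c := by rw [hc_def] at hfA hfB ⊢; linarith
    have hfZ : f (toR z) < c := hfint _ hz
    set f₁ : ℝ := f ((1:ℝ), (0:ℝ)) with hf1_def
    set f₂ : ℝ := f ((0:ℝ), (1:ℝ)) with hf2_def
    have hexp : ∀ v : ℝ × ℝ, f v = v.1 * f₁ + v.2 * f₂ := by
      intro v
      have hv : v = v.1 • ((1:ℝ), (0:ℝ)) + v.2 • ((0:ℝ), (1:ℝ)) := by
        rw [Prod.ext_iff]; constructor <;> simp
      conv_lhs => rw [hv]
      simp only [map_add, map_smul, smul_eq_mul, hf1_def, hf2_def]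
    have hpos : 0 < f₁^2 + f₂^2 := by
      rcases eq_or_ne f₁ 0 with h1 | h1
      · rcases eq_or_ne f₂ 0 with h2 | h2
        · exfalso
          have hZ0 : f (toR z) = 0 := by rw [hexp, h1, h2]; ring
          have hA0 : f (toR a) = 0 := by rw [hexp, h1, h2]; ring
          rw [hZ0] at hfZ
          rw [hA0] at hfAc
          linarith
        · have h2' : 0 < f₂^2 := (sq_nonneg f₂).lt_of_ne (Ne.symm (pow_ne_zero 2 h2))
          linarith only [h2', sq_nonneg f₁]
      · have h1' : 0 < f₁^2 := (sq_nonneg f₁).lt_of_ne (Ne.symm (pow_ne_zero 2 h1))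
        linarith only [h1', sq_nonneg f₂]
    set G : ℝ × ℝ → ℝ := fun v => f₂ * v.1 - f₁ * v.2 with hG_def
    have hGcont : Continuous G := by
      rw [hG_def]; fun_prop
    have hinj2 : ∀ x y : ℝ × ℝ, f x = f y → G x = G y → x = y := by
      intro x y h1 h2
      rw [hexp x, hexp y] at h1
      simp only [hG_def] at h2
      have e1 : (f₁^2 + f₂^2) * (x.1 - y.1) = 0 := by linear_combination f₁ * h1 + f₂ * h2
      have e2 : (f₁^2 + f₂^2) * (x.2 - y.2) = 0 := by linear_combination f₂ * h1 - f₁ * h2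
      have hx1 : x.1 = y.1 := by
        rcases mul_eq_zero.mp e1 with h | h
        · exact absurd h (ne_of_gt hpos)
        · linarith
      have hx2 : x.2 = y.2 := by
        rcases mul_eq_zero.mp e2 with h | h
        · exact absurd h (ne_of_gt hpos)
        · linarith
      exact Prod.ext hx1 hx2
    set E : Set (ℝ × ℝ) := P ∩ {v | f v = c} with hE_def
    have hEP : E ⊆ P := Set.inter_subset_left
    have hAE : toR a ∈ E := ⟨hAP, hfAc⟩
    have hBE : toR b ∈ E := ⟨hBP, hfBc⟩
    have hEcomp : IsCompact E := hPcomp.inter_right (isClosed_eq f.continuous continuous_const)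
    have hEconv : Convex ℝ E := by
      refine hPc.inter ?_
      intro p hp q hq θ₁ θ₂ h₁ h₂ hs
      simp only [Set.mem_setOf_eq] at hp hq ⊢
      simp only [map_add, map_smul, smul_eq_mul]
      rw [hp, hq]
      linear_combination c * hs
    have hEne : E.Nonempty := ⟨m, hmP, rfl⟩
    obtain ⟨u, huE, humin⟩ := hEcomp.exists_isMinOn hEne hGcont.continuousOn
    obtain ⟨v, hvE, hvmax⟩ := hEcomp.exists_isMaxOn hEne hGcont.continuousOn
    have hfu : f u = c := huE.2
    have hfv : f v = c := hvE.2
    have hseg : E = segment ℝ u v := by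
      apply Set.Subset.antisymm
      · intro x hxE
        have hGux : G u ≤ G x := isMinOn_iff.mp humin x hxE
        have hGxv : G x ≤ G v := isMaxOn_iff.mp hvmax x hxE
        rcases eq_or_lt_of_le (isMinOn_iff.mp humin v hvE) with heq | hlt
        · have hx_u : x = u := by
            refine hinj2 x u ?_ ?_
            · rw [hxE.2, hfu]
            · linarith
          rw [hx_u]; exact left_mem_segment ℝ u v
        · set θ : ℝ := (G v - G x) / (G v - G u) with hθ_def
          have hd0 : 0 < G v - G u := by linarith
          have hθ0 : 0 ≤ θ := div_nonneg (by linarith) hd0.le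
          have hθ1 : θ ≤ 1 := by rw [hθ_def, div_le_one hd0]; linarith
          refine ⟨θ, 1 - θ, hθ0, by linarith, by ring, ?_⟩
          refine hinj2 _ x ?_ ?_
          · simp only [map_add, map_smul, smul_eq_mul]
            rw [hfu, hfv, hxE.2]; ring
          · have hθG : θ * (G v - G u) = G v - G x := by
              rw [hθ_def]; field_simp
            simp only [hG_def, Prod.fst_add, Prod.smul_fst, Prod.snd_add, Prod.smul_snd,
              smul_eq_mul] at hθG ⊢
            linear_combination -hθG
      · rw [hE_def]
        exact hEconv.segment_subset huE hvE
    have habne : toR a ≠ toR b := by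
      intro he
      have h1 : (a.1:ℝ) = b.1 := congrArg Prod.fst he
      have h2 : (a.2:ℝ) = b.2 := congrArg Prod.snd he
      have h1' : a.1 = b.1 := by exact_mod_cast h1
      have h2' : a.2 = b.2 := by exact_mod_cast h2
      have : d = 0 := by rw [hd_def, h1', h2']; ring
      rw [this] at habs
      simp at habs
    have hune : u ≠ v := by
      intro h
      rw [h, segment_same] at hseg
      have h1 : toR a = v := by
        have := hseg ▸ hAE
        simpa using this
      have h2 : toR b = v := by
        have := hseg ▸ hBE
        simpa using this
      exact habne (h1.trans h2.symm)
    refine Or.inl ⟨E, ⟨⟨hEP, ?_⟩, u, v, hune, hseg⟩, hAE, hBE⟩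
    intro x₁ hx₁ x₂ hx₂ x hxE hxseg
    obtain ⟨θ₁, θ₂, hθ₁, hθ₂, hsum, hcomb⟩ := hxseg
    have hfx : f x = c := hxE.2
    have hfx1 : f x₁ ≤ c := hfle _ hx₁
    have hfx2 : f x₂ ≤ c := hfle _ hx₂
    have hfcomb : θ₁ * f x₁ + θ₂ * f x₂ = c := by
      have h := congrArg f hcomb
      simp only [map_add, map_smul, smul_eq_mul] at h
      rw [hfx] at h
      exact h
    have hcc : θ₁ * c + θ₂ * c = c := by linear_combination c * hsum
    have h1c : f x₁ = c := by
      by_contra hne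
      have hlt : f x₁ < c := lt_of_le_of_ne hfx1 hne
      have k1 : θ₁ * f x₁ < θ₁ * c := mul_lt_mul_of_pos_left hlt hθ₁
      have k2 : θ₂ * f x₂ ≤ θ₂ * c := mul_le_mul_of_nonneg_left hfx2 hθ₂.le
      linarith
    have h2c : f x₂ = c := by
      by_contra hne
      have hlt : f x₂ < c := lt_of_le_of_ne hfx2 hne
      have k1 : θ₂ * f x₂ < θ₂ * c := mul_lt_mul_of_pos_left hlt hθ₂
      have k2 : θ₁ * f x₁ ≤ θ₁ * c := mul_le_mul_of_nonneg_left hfx1 hθ₁.le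
      linarith
    exact ⟨hx₁, h1c⟩
end

section
/- Let P be a convex lattice polygon containing the unimodular triangle T₁ with vertices (0,0), (1,0), (0,1), such that (0,0) is an interior lattice point of P, and such that (1,0) and (0,1) lie on the boundary of P but not on a common edge of P. Then (1,1) is a point of P. -/
/-- The sum-of-coordinates functional as a continuous linear map. -/
noncomputable def sumCLM : (ℝ × ℝ) →L[ℝ] ℝ :=
  ContinuousLinearMap.fst ℝ ℝ ℝ + ContinuousLinearMap.snd ℝ ℝ ℝ

lemma sumCLM_apply (p : ℝ × ℝ) : sumCLM p = p.1 + p.2 := rfl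

/-- Decomposition of a linear functional on ℝ². -/
lemma clm_decomp (f : (ℝ × ℝ) →L[ℝ] ℝ) (p : ℝ × ℝ) :
    f p = p.1 * f (1, 0) + p.2 * f (0, 1) := by
  have h : p = p.1 • ((1 : ℝ), (0 : ℝ)) + p.2 • ((0 : ℝ), (1 : ℝ)) := by
    ext <;> simp
  conv_lhs => rw [h]
  rw [map_add, map_smul, map_smul, smul_eq_mul, smul_eq_mul]

/-- If the whole polygon lies in the half-plane `x + y ≤ 1`, then the points `(1,0)`
and `(0,1)` (assumed to lie in `P`) lie on a common edge of `P`. -/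
lemma edge_of_halfplane (P : Set (ℝ × ℝ)) (hPc : IsCompact P) (hconv : Convex ℝ P)
    (h1 : ((1 : ℝ), (0 : ℝ)) ∈ P) (h2 : ((0 : ℝ), (1 : ℝ)) ∈ P)
    (hb : ∀ p ∈ P, p.1 + p.2 ≤ 1) :
    ∃ E : Set (ℝ × ℝ), IsEdge P E ∧ ((1 : ℝ), (0 : ℝ)) ∈ E ∧ ((0 : ℝ), (1 : ℝ)) ∈ E := by
  set E : Set (ℝ × ℝ) := {p ∈ P | p.1 + p.2 = 1} with hE
  have h1E : ((1 : ℝ), (0 : ℝ)) ∈ E := ⟨h1, by norm_num⟩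
  have h2E : ((0 : ℝ), (1 : ℝ)) ∈ E := ⟨h2, by norm_num⟩
  -- E is exposed, hence extreme
  have hexp : IsExposed ℝ P E := by
    intro _
    refine ⟨sumCLM, ?_⟩
    ext x
    simp only [hE, Set.mem_setOf_eq, sumCLM_apply]
    constructor
    · rintro ⟨hxP, hx1⟩
      exact ⟨hxP, fun y hy => by rw [hx1]; exact hb y hy⟩
    · rintro ⟨hxP, hxmax⟩
      refine ⟨hxP, le_antisymm (hb x hxP) ?_⟩
      have := hxmax _ h1
      simpa using this
  have hext : IsExtreme ℝ P E := hexp.isExtreme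
  -- E is compact
  have hEclosed : IsClosed E := by
    have : E = P ∩ {p : ℝ × ℝ | p.1 + p.2 = 1} := rfl
    rw [this]
    exact hPc.isClosed.inter (isClosed_eq (by fun_prop) continuous_const)
  have hEc : IsCompact E := IsCompact.of_isClosed_subset hPc hEclosed (fun x hx => hx.1)
  have hEconv : Convex ℝ E := by
    have : E = P ∩ {p : ℝ × ℝ | p.1 + p.2 = 1} := rfl
    rw [this]
    exact hconv.inter (convex_hyperplane
      (f := fun p : ℝ × ℝ => p.1 + p.2)
      ⟨fun x y => by simp [Prod.fst_add, Prod.snd_add]; ring,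
       fun c x => by simp [Prod.smul_fst, Prod.smul_snd]; ring⟩ 1)
  -- the coordinate along the edge
  set g : (ℝ × ℝ) → ℝ := fun p => p.2 - p.1 with hg
  have hgc : ContinuousOn g E := by fun_prop
  obtain ⟨u, huE, humin⟩ := hEc.exists_isMinOn ⟨_, h1E⟩ hgc
  obtain ⟨v, hvE, hvmax⟩ := hEc.exists_isMaxOn ⟨_, h1E⟩ hgc
  have hgu : g u ≤ -1 := by simpa [hg] using humin h1E
  have hgv : (1 : ℝ) ≤ g v := by simpa [hg] using hvmax h2E
  have huv : g u < g v := by linarith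
  have hune : u ≠ v := fun h => by rw [h] at huv; exact lt_irrefl _ huv
  -- every point of E is a convex combination of u and v
  have hEseg : E = segment ℝ u v := by
    apply Set.Subset.antisymm
    · intro p hp
      have hpu : g u ≤ g p := humin hp
      have hpv : g p ≤ g v := hvmax hp
      have hd : (0 : ℝ) < g v - g u := by linarith
      have hd' : g v - g u ≠ 0 := ne_of_gt hd
      have hu1 : u.1 + u.2 = 1 := huE.2
      have hv1 : v.1 + v.2 = 1 := hvE.2
      have hp1 : p.1 + p.2 = 1 := hp.2
      have hgu' : g u = u.2 - u.1 := rfl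
      have hgv' : g v = v.2 - v.1 := rfl
      have hgp' : g p = p.2 - p.1 := rfl
      have key1 : (g v - g p) * u.1 + (g p - g u) * v.1 = p.1 * (g v - g u) := by
        rw [hgu', hgv', hgp']
        linear_combination (p.1 - v.1) * hu1 + (u.1 - p.1) * hv1 + (v.1 - u.1) * hp1
      have key2 : (g v - g p) * u.2 + (g p - g u) * v.2 = p.2 * (g v - g u) := by
        rw [hgu', hgv', hgp']
        linear_combination (p.1 - v.1) * hu1 + (u.1 - p.1) * hv1 + (v.1 - u.1) * hp1
      refine ⟨(g v - g p) / (g v - g u), (g p - g u) / (g v - g u),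
        div_nonneg (by linarith) hd.le, div_nonneg (by linarith) hd.le, ?_, ?_⟩
      · rw [← add_div, div_eq_one_iff_eq hd']; ring
      · ext
        · simp only [Prod.fst_add, Prod.smul_fst, smul_eq_mul]
          rw [div_mul_eq_mul_div, div_mul_eq_mul_div, ← add_div, key1,
            mul_div_assoc, div_self hd', mul_one]
        · simp only [Prod.snd_add, Prod.smul_snd, smul_eq_mul]
          rw [div_mul_eq_mul_div, div_mul_eq_mul_div, ← add_div, key2,
            mul_div_assoc, div_self hd', mul_one]
    · exact hEconv.segment_subset huE hvE
  exact ⟨E, ⟨hext, u, v, hune, hEseg⟩, h1E, h2E⟩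

/-- A supporting functional at a frontier point, from an interior point. -/
lemma support_le {P : Set (ℝ × ℝ)} (hconv : Convex ℝ P) {x₀ q : ℝ × ℝ}
    (hx₀ : x₀ ∈ interior P) {f : (ℝ × ℝ) →L[ℝ] ℝ}
    (hf : ∀ a ∈ interior P, f a < f q) {p : ℝ × ℝ} (hp : p ∈ P) : f p ≤ f q := by
  by_contra hlt
  push_neg at hlt
  have hfx₀ : f x₀ < f q := hf x₀ hx₀
  set C : ℝ := f p - f x₀ with hC
  have hCpos : 0 < C := by simp only [hC]; linarith
  set t : ℝ := min 1 ((f p - f q) / (2 * C)) with ht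
  have htpos : 0 < t := lt_min one_pos (div_pos (by linarith) (by positivity))
  have ht1 : t ≤ 1 := min_le_left _ _
  have hmem : p + t • (x₀ - p) ∈ interior P :=
    hconv.add_smul_sub_mem_interior hp hx₀ ⟨htpos, ht1⟩
  have hval : f (p + t • (x₀ - p)) = f p - t * C := by
    rw [map_add, map_smul, map_sub, smul_eq_mul, hC]; ring
  have hlt2 : f p - t * C < f q := by rw [← hval]; exact hf _ hmem
  have htle : t ≤ (f p - f q) / (2 * C) := min_le_right _ _
  clear_value t C
  have h2 : t * C ≤ (f p - f q) / 2 := by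
    calc t * C ≤ ((f p - f q) / (2 * C)) * C :=
          mul_le_mul_of_nonneg_right htle hCpos.le
    _ = (f p - f q) / 2 := by
          field_simp
  linarith

theorem stmt1 (P : Set (ℝ × ℝ)) (hP : IsLatticePolygon P)
    (hsub : convexHull ℝ {((0 : ℝ), (0 : ℝ)), (1, 0), (0, 1)} ⊆ P)
    (h00 : ((0 : ℝ), (0 : ℝ)) ∈ interior P)
    (h10 : ((1 : ℝ), (0 : ℝ)) ∈ frontier P)
    (h01 : ((0 : ℝ), (1 : ℝ)) ∈ frontier P)
    (hnoedge : ¬ ∃ E : Set (ℝ × ℝ), IsEdge P E ∧ ((1 : ℝ), (0 : ℝ)) ∈ E ∧ ((0 : ℝ), (1 : ℝ)) ∈ E) :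
    ((1 : ℝ), (1 : ℝ)) ∈ P := by
  obtain ⟨S, hPeq, -⟩ := hP
  have hPc : IsCompact P := by
    rw [hPeq]; exact (Finset.finite_toSet _).isCompact_convexHull ℝ
  have hconv : Convex ℝ P := by rw [hPeq]; exact convex_convexHull ℝ _
  have hq1P : ((1 : ℝ), (0 : ℝ)) ∈ P :=
    hsub (subset_convexHull ℝ _ (by simp))
  have hq2P : ((0 : ℝ), (1 : ℝ)) ∈ P :=
    hsub (subset_convexHull ℝ _ (by simp))
  -- key: P is not contained in the halfplane x + y ≤ 1
  have hkey : ¬ (∀ p ∈ P, p.1 + p.2 ≤ 1) := fun h =>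
    hnoedge (edge_of_halfplane P hPc hconv hq1P hq2P h)
  -- a lattice point with coordinate sum at least 2
  have hw : ∃ w ∈ S, 2 ≤ w.1 + w.2 := by
    by_contra h
    push_neg at h
    apply hkey
    intro p hp
    rw [hPeq] at hp
    have hhp : Convex ℝ {q : ℝ × ℝ | q.1 + q.2 ≤ 1} :=
      convex_halfSpace_le
        ⟨fun x y => by simp [Prod.fst_add, Prod.snd_add]; ring,
         fun c x => by simp [Prod.smul_fst, Prod.smul_snd]; ring⟩ 1
    have := convexHull_min ?_ hhp hp
    · exact this
    · intro x hx
      simp only [Finset.coe_image, Set.mem_image, Finset.mem_coe] at hx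
      obtain ⟨w, hwS, rfl⟩ := hx
      have hw2 : w.1 + w.2 ≤ 1 := by linarith [h w hwS]
      show (toR w).1 + (toR w).2 ≤ 1
      simp only [toR]
      have : ((w.1 + w.2 : ℤ) : ℝ) ≤ 1 := by exact_mod_cast hw2
      push_cast at this
      linarith
  obtain ⟨w, hwS, hwsum⟩ := hw
  have hwP : toR w ∈ P := by
    rw [hPeq]
    exact subset_convexHull ℝ _ (by
      simp only [Finset.coe_image, Set.mem_image, Finset.mem_coe]
      exact ⟨w, hwS, rfl⟩)
  set W1 : ℝ := (w.1 : ℝ) with hW1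
  set W2 : ℝ := (w.2 : ℝ) with hW2
  have hWsum : (2 : ℝ) ≤ W1 + W2 := by
    have : ((2 : ℤ) : ℝ) ≤ ((w.1 + w.2 : ℤ) : ℝ) := by exact_mod_cast hwsum
    push_cast at this
    linarith
  -- supporting functional machinery
  have hsupport : ∀ q : ℝ × ℝ, q ∈ frontier P →
      ∃ f : (ℝ × ℝ) →L[ℝ] ℝ, (∀ p ∈ P, f p ≤ f q) ∧ 0 < f q := by
    intro q hq
    have hqni : q ∉ interior P := hq.2
    obtain ⟨f, hf⟩ :=
      geometric_hahn_banach_open_point hconv.interior isOpen_interior hqni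
    refine ⟨f, fun p hp => support_le hconv h00 hf hp, ?_⟩
    have := hf _ h00
    have h0 : f ((0 : ℝ), (0 : ℝ)) = 0 := by
      have : ((0 : ℝ), (0 : ℝ)) = (0 : ℝ × ℝ) := rfl
      rw [this, map_zero]
    linarith
  -- supporting line at (1,0): get w.2 ≥ 1
  have hw2ge : (1 : ℤ) ≤ w.2 := by
    obtain ⟨f, hfle, hfpos⟩ := hsupport _ h10
    set a : ℝ := f (1, 0) with ha
    set b : ℝ := f (0, 1) with hb
    have hapos : 0 < a := hfpos
    have hble : b ≤ a := by
      have h := hfle _ hq2P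
      rw [clm_decomp f (0, 1)] at h
      norm_num at h
      exact h
    have hblt : b < a := by
      rcases lt_or_eq_of_le hble with h | h
      · exact h
      · exfalso
        apply hkey
        intro p hp
        have := hfle p hp
        rw [clm_decomp f p] at this
        rw [← ha, ← hb, ← h] at this
        have h2 : b * (p.1 + p.2) ≤ b := by ring_nf; ring_nf at this; linarith
        have hbpos : 0 < b := h ▸ hapos
        nlinarith
    have hwineq : a * W1 + b * W2 ≤ a := by
      have := hfle _ hwP
      rw [clm_decomp f (toR w)] at this
      simp only [toR] at this
      rw [clm_decomp f (1, 0)] at this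
      simp only [← ha, ← hb] at this
      ring_nf at this ⊢
      linarith
    by_contra hcon
    push_neg at hcon
    have hW2le : W2 ≤ 0 := by
      rw [hW2]
      exact_mod_cast (by omega : w.2 ≤ 0)
    nlinarith [mul_nonneg (sub_nonneg.mpr hble) (neg_nonneg.mpr hW2le)]
  -- supporting line at (0,1): get w.1 ≥ 1
  have hw1ge : (1 : ℤ) ≤ w.1 := by
    obtain ⟨f, hfle, hfpos⟩ := hsupport _ h01
    set a : ℝ := f (1, 0) with ha
    set b : ℝ := f (0, 1) with hb
    have hbpos : 0 < b := hfpos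
    have hale : a ≤ b := by
      have h := hfle _ hq1P
      rw [clm_decomp f (1, 0)] at h
      norm_num at h
      exact h
    have halt : a < b := by
      rcases lt_or_eq_of_le hale with h | h
      · exact h
      · exfalso
        apply hkey
        intro p hp
        have := hfle p hp
        rw [clm_decomp f p] at this
        rw [← ha, ← hb, h] at this
        have h2 : b * (p.1 + p.2) ≤ b := by ring_nf; ring_nf at this; linarith
        nlinarith
    have hwineq : a * W1 + b * W2 ≤ b := by
      have := hfle _ hwP
      rw [clm_decomp f (toR w)] at this
      simp only [toR] at this
      rw [clm_decomp f (0, 1)] at this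
      simp only [← ha, ← hb] at this
      ring_nf at this ⊢
      linarith
    by_contra hcon
    push_neg at hcon
    have hW1le : W1 ≤ 0 := by
      rw [hW1]
      exact_mod_cast (by omega : w.1 ≤ 0)
    nlinarith [mul_nonneg (sub_nonneg.mpr hale) (neg_nonneg.mpr hW1le)]
  -- real versions
  have hW1ge : (1 : ℝ) ≤ W1 := by rw [hW1]; exact_mod_cast hw1ge
  have hW2ge : (1 : ℝ) ≤ W2 := by rw [hW2]; exact_mod_cast hw2ge
  -- the convex combination
  set s : ℝ := W1 + W2 - 1 with hs
  have hspos : (0 : ℝ) < s := by simp only [hs]; linarith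
  have hs' : s ≠ 0 := ne_of_gt hspos
  set cw : Fin 3 → ℝ := ![(W2 - 1) / s, (W1 - 1) / s, 1 / s] with hcw
  set cz : Fin 3 → ℝ × ℝ := ![((1 : ℝ), (0 : ℝ)), ((0 : ℝ), (1 : ℝ)), (W1, W2)] with hcz
  have hmem : (∑ i : Fin 3, cw i • cz i) ∈ P := by
    apply hconv.sum_mem
    · intro i _
      fin_cases i <;> simp only [hcw, Matrix.cons_val_zero, Matrix.cons_val_one,
        Matrix.head_cons, Matrix.cons_val_two, Matrix.tail_cons] <;>
        exact div_nonneg (by linarith) hspos.le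
    · rw [Fin.sum_univ_three]
      simp only [hcw, Matrix.cons_val_zero, Matrix.cons_val_one, Matrix.head_cons,
        Matrix.cons_val_two, Matrix.tail_cons]
      field_simp
      simp only [hs]; ring
    · intro i _
      fin_cases i
      · exact hq1P
      · exact hq2P
      · exact hwP
  have heq : (∑ i : Fin 3, cw i • cz i) = ((1 : ℝ), (1 : ℝ)) := by
    rw [Fin.sum_univ_three]
    simp only [hcw, hcz, Matrix.cons_val_zero, Matrix.cons_val_one, Matrix.head_cons,
      Matrix.cons_val_two, Matrix.tail_cons]
    ext
    · simp only [Prod.fst_add, Prod.smul_fst, smul_eq_mul]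
      field_simp
      simp only [hs]; ring
    · simp only [Prod.snd_add, Prod.smul_snd, smul_eq_mul]
      field_simp
      simp only [hs]; ring
  rwa [heq] at hmem
end
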